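/- With coordinates u₁ = (z₁+z₂)/2, u₂ = (z₁−z₂)/2 on 𝔻², the curvature of the kernel K^{(λ,μ)}(z,z) = (1−|z₁|²)^{−λ}(1−|z₂|²)^{−μ} in the u-coordinates, restricted to the diagonal {u₂ = 0}, equals (1−|u₁|²)^{−2} · [[λ+μ, λ−μ],[λ−μ, λ+μ]]; i.e. ∂̄_{u_i}∂_{u_j} log K^{(λ,μ)} evaluated at u₂ = 0 gives this matrix. -/

import Mathlib

/-- Wirtinger derivatives on ℂ × ℂ. -/
noncomputable def wd1 (f : ℂ × ℂ → ℂ) (z : ℂ × ℂ) : ℂ :=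
  (1/2) * (fderiv ℝ f z (1, 0) - Complex.I * fderiv ℝ f z (Complex.I, 0))

noncomputable def wd2 (f : ℂ × ℂ → ℂ) (z : ℂ × ℂ) : ℂ :=
  (1/2) * (fderiv ℝ f z (0, 1) - Complex.I * fderiv ℝ f z (0, Complex.I))

noncomputable def wb1 (f : ℂ × ℂ → ℂ) (z : ℂ × ℂ) : ℂ :=
  (1/2) * (fderiv ℝ f z (1, 0) + Complex.I * fderiv ℝ f z (Complex.I, 0))

noncomputable def wb2 (f : ℂ × ℂ → ℂ) (z : ℂ × ℂ) : ℂ :=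
  (1/2) * (fderiv ℝ f z (0, 1) + Complex.I * fderiv ℝ f z (0, Complex.I))

/-- log K^{(λ,μ)} in the coordinates u₁ = (z₁+z₂)/2, u₂ = (z₁−z₂)/2,
i.e. z₁ = u₁+u₂, z₂ = u₁−u₂. -/
noncomputable def logKu (lam mu : ℝ) : ℂ × ℂ → ℂ := fun u =>
  ((Real.log ((1 - ‖u.1 + u.2‖ ^ 2) ^ (-lam) *
      (1 - ‖u.1 - u.2‖ ^ 2) ^ (-mu)) : ℝ) : ℂ)

noncomputable def Nmap (z : ℂ) : ℂ →L[ℝ] ℝ :=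
  (2*z.re) • Complex.reCLM + (2*z.im) • Complex.imCLM

lemma hasFDerivAt_normSq (z : ℂ) : HasFDerivAt Complex.normSq (Nmap z) z := by
  have h : (Complex.normSq : ℂ → ℝ) = fun z : ℂ => z.re*z.re + z.im*z.im := by
    funext w; simp [Complex.normSq_apply]
  rw [h]
  have hre : HasFDerivAt (fun z : ℂ => z.re) (Complex.reCLM : ℂ →L[ℝ] ℝ) z :=
    Complex.reCLM.hasFDerivAt
  have him : HasFDerivAt (fun z : ℂ => z.im) (Complex.imCLM : ℂ →L[ℝ] ℝ) z :=
    Complex.imCLM.hasFDerivAt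
  have := (hre.mul hre).add (him.mul him)
  refine this.congr_fderiv ?_
  ext w <;> simp [Nmap] <;> ring

noncomputable def Dpsi (z : ℂ) : ℂ →L[ℝ] ℝ := (1 - Complex.normSq z)⁻¹ • (-(Nmap z))

lemma hasFDerivAt_psi {z : ℂ} (hz : Complex.normSq z < 1) :
    HasFDerivAt (fun z : ℂ => Real.log (1 - Complex.normSq z)) (Dpsi z) z := by
  have h1 : HasFDerivAt (fun z : ℂ => 1 - Complex.normSq z) (-(Nmap z)) z := by
    exact ((hasFDerivAt_const (1:ℝ) z).sub (hasFDerivAt_normSq z)).congr_fderiv (zero_sub _)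
  have h2 : HasDerivAt Real.log (1 - Complex.normSq z)⁻¹ (1 - Complex.normSq z) :=
    Real.hasDerivAt_log (by linarith)
  exact h2.comp_hasFDerivAt z h1

noncomputable def Ladd : ℂ × ℂ →L[ℝ] ℂ :=
  ContinuousLinearMap.fst ℝ ℂ ℂ + ContinuousLinearMap.snd ℝ ℂ ℂ
noncomputable def Lsub : ℂ × ℂ →L[ℝ] ℂ :=
  ContinuousLinearMap.fst ℝ ℂ ℂ - ContinuousLinearMap.snd ℝ ℂ ℂ

noncomputable def Ffun (lam mu : ℝ) : ℂ × ℂ → ℂ := fun u =>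
  ((-lam * Real.log (1 - Complex.normSq (u.1 + u.2))
    - mu * Real.log (1 - Complex.normSq (u.1 - u.2)) : ℝ) : ℂ)

noncomputable def DF (lam mu : ℝ) (u : ℂ × ℂ) : ℂ × ℂ →L[ℝ] ℂ :=
  Complex.ofRealCLM.comp
    (((-lam) • (Dpsi (u.1 + u.2)).comp Ladd) + ((-mu) • (Dpsi (u.1 - u.2)).comp Lsub))

lemma hasFDerivAt_F (lam mu : ℝ) {u : ℂ × ℂ}
    (h1 : Complex.normSq (u.1 + u.2) < 1) (h2 : Complex.normSq (u.1 - u.2) < 1) :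
    HasFDerivAt (Ffun lam mu) (DF lam mu u) u := by
  have ha : HasFDerivAt (fun u : ℂ × ℂ => u.1 + u.2) (Ladd) u := Ladd.hasFDerivAt
  have hb : HasFDerivAt (fun u : ℂ × ℂ => u.1 - u.2) (Lsub) u := Lsub.hasFDerivAt
  have hpa := (hasFDerivAt_psi h1).comp u ha
  have hpb := (hasFDerivAt_psi h2).comp u hb
  have hreal : HasFDerivAt
      (fun u : ℂ × ℂ => -lam * Real.log (1 - Complex.normSq (u.1 + u.2))
        - mu * Real.log (1 - Complex.normSq (u.1 - u.2)))
      (((-lam) • (Dpsi (u.1 + u.2)).comp Ladd) + ((-mu) • (Dpsi (u.1 - u.2)).comp Lsub)) u := by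
    have := (hpa.const_mul (-lam)).sub (hpb.const_mul mu)
    refine this.congr_fderiv ?_
    ext w <;> simp <;> ring
  exact Complex.ofRealCLM.hasFDerivAt.comp u hreal

def Sset : Set (ℂ × ℂ) :=
  {u | Complex.normSq (u.1 + u.2) < 1 ∧ Complex.normSq (u.1 - u.2) < 1}

lemma Sset_open : IsOpen Sset := by
  apply IsOpen.inter
  · exact isOpen_lt (Complex.continuous_normSq.comp (continuous_fst.add continuous_snd))
      continuous_const
  · exact isOpen_lt (Complex.continuous_normSq.comp (continuous_fst.sub continuous_snd))
      continuous_const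

lemma logKu_eq_F (lam mu : ℝ) {u : ℂ × ℂ} (hu : u ∈ Sset) :
    logKu lam mu u = Ffun lam mu u := by
  obtain ⟨h1, h2⟩ := hu
  have p1 : (0:ℝ) < 1 - ‖u.1 + u.2‖ ^ 2 := by
    rw [Complex.sq_norm]; linarith
  have p2 : (0:ℝ) < 1 - ‖u.1 - u.2‖ ^ 2 := by
    rw [Complex.sq_norm]; linarith
  unfold logKu Ffun
  rw [Real.log_mul (ne_of_gt (Real.rpow_pos_of_pos p1 _)) (ne_of_gt (Real.rpow_pos_of_pos p2 _)),
    Real.log_rpow p1, Real.log_rpow p2]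
  push_cast
  rw [Complex.sq_norm, Complex.sq_norm]
  ring

noncomputable def Gc (z : ℂ) : ℂ := ((1 - Complex.normSq z)⁻¹ : ℝ) • (starRingEnd ℂ) z

lemma wd1_eq (lam mu : ℝ) {u : ℂ × ℂ} (hu : u ∈ Sset) :
    wd1 (logKu lam mu) u = (lam : ℂ) * Gc (u.1 + u.2) + (mu : ℂ) * Gc (u.1 - u.2) := by
  have hev : logKu lam mu =ᶠ[nhds u] Ffun lam mu :=
    Filter.eventuallyEq_of_mem (Sset_open.mem_nhds hu) (fun v hv => logKu_eq_F lam mu hv)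
  have hfd : fderiv ℝ (logKu lam mu) u = DF lam mu u := by
    rw [hev.fderiv_eq]
    exact (hasFDerivAt_F lam mu hu.1 hu.2).fderiv
  unfold wd1
  rw [hfd]
  simp only [DF, Dpsi, Nmap, Ladd, Lsub, Gc, ContinuousLinearMap.comp_apply,
    ContinuousLinearMap.add_apply, ContinuousLinearMap.sub_apply,
    ContinuousLinearMap.smul_apply, ContinuousLinearMap.neg_apply,
    ContinuousLinearMap.coe_fst', ContinuousLinearMap.coe_snd',
    Complex.ofRealCLM_apply, Complex.reCLM_apply, Complex.imCLM_apply]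
  set a := u.1 + u.2
  set b := u.1 - u.2
  have ha : (starRingEnd ℂ) a = (a.re : ℂ) - a.im * Complex.I := by
    apply Complex.ext <;> simp
  have hb : (starRingEnd ℂ) b = (b.re : ℂ) - b.im * Complex.I := by
    apply Complex.ext <;> simp
  simp only [ha, hb, Complex.real_smul]
  push_cast
  simp [Complex.add_re, Complex.add_im, Complex.I_re, Complex.I_im]
  ring

lemma wd2_eq (lam mu : ℝ) {u : ℂ × ℂ} (hu : u ∈ Sset) :
    wd2 (logKu lam mu) u = (lam : ℂ) * Gc (u.1 + u.2) - (mu : ℂ) * Gc (u.1 - u.2) := by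
  have hev : logKu lam mu =ᶠ[nhds u] Ffun lam mu :=
    Filter.eventuallyEq_of_mem (Sset_open.mem_nhds hu) (fun v hv => logKu_eq_F lam mu hv)
  have hfd : fderiv ℝ (logKu lam mu) u = DF lam mu u := by
    rw [hev.fderiv_eq]
    exact (hasFDerivAt_F lam mu hu.1 hu.2).fderiv
  unfold wd2
  rw [hfd]
  simp only [DF, Dpsi, Nmap, Ladd, Lsub, Gc, ContinuousLinearMap.comp_apply,
    ContinuousLinearMap.add_apply, ContinuousLinearMap.sub_apply,
    ContinuousLinearMap.smul_apply, ContinuousLinearMap.neg_apply,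
    ContinuousLinearMap.coe_fst', ContinuousLinearMap.coe_snd',
    Complex.ofRealCLM_apply, Complex.reCLM_apply, Complex.imCLM_apply]
  set a := u.1 + u.2
  set b := u.1 - u.2
  have ha : (starRingEnd ℂ) a = (a.re : ℂ) - a.im * Complex.I := by
    apply Complex.ext <;> simp
  have hb : (starRingEnd ℂ) b = (b.re : ℂ) - b.im * Complex.I := by
    apply Complex.ext <;> simp
  simp only [ha, hb, Complex.real_smul]
  push_cast
  simp [Complex.add_re, Complex.add_im, Complex.I_re, Complex.I_im]
  ring

noncomputable def conjCLM : ℂ →L[ℝ] ℂ := Complex.conjCLE.toContinuousLinearMap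

noncomputable def DGc (z : ℂ) : ℂ →L[ℝ] ℂ :=
  ((1 - Complex.normSq z)⁻¹ : ℝ) • conjCLM +
    ((-((1 - Complex.normSq z) ^ 2)⁻¹) • (-(Nmap z))).smulRight ((starRingEnd ℂ) z)

lemma hasFDerivAt_Gc {z : ℂ} (hz : Complex.normSq z < 1) :
    HasFDerivAt Gc (DGc z) z := by
  have hc : HasFDerivAt (fun z : ℂ => 1 - Complex.normSq z) (-(Nmap z)) z := by
    exact ((hasFDerivAt_const (1:ℝ) z).sub (hasFDerivAt_normSq z)).congr_fderiv (zero_sub _)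
  have hne : 1 - Complex.normSq z ≠ 0 := by intro h; nlinarith [h]
  have hinv : HasFDerivAt (fun z : ℂ => (1 - Complex.normSq z)⁻¹)
      ((-((1 - Complex.normSq z) ^ 2)⁻¹) • (-(Nmap z))) z :=
    (hasDerivAt_inv hne).comp_hasFDerivAt z hc
  have hconj : HasFDerivAt (fun z : ℂ => (starRingEnd ℂ) z) conjCLM z := by
    have := Complex.conjCLE.toContinuousLinearMap.hasFDerivAt (x := z)
    convert this using 1 <;> rfl
  exact hinv.smul hconj

noncomputable def W1 (lam mu : ℝ) : ℂ × ℂ → ℂ := fun u =>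
  (lam : ℂ) * Gc (u.1 + u.2) + (mu : ℂ) * Gc (u.1 - u.2)
noncomputable def W2 (lam mu : ℝ) : ℂ × ℂ → ℂ := fun u =>
  (lam : ℂ) * Gc (u.1 + u.2) - (mu : ℂ) * Gc (u.1 - u.2)

noncomputable def DW1 (lam mu : ℝ) (u : ℂ × ℂ) : ℂ × ℂ →L[ℝ] ℂ :=
  (lam : ℂ) • ((DGc (u.1 + u.2)).comp Ladd) + (mu : ℂ) • ((DGc (u.1 - u.2)).comp Lsub)
noncomputable def DW2 (lam mu : ℝ) (u : ℂ × ℂ) : ℂ × ℂ →L[ℝ] ℂ :=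
  (lam : ℂ) • ((DGc (u.1 + u.2)).comp Ladd) - (mu : ℂ) • ((DGc (u.1 - u.2)).comp Lsub)

lemma hasFDerivAt_W1 (lam mu : ℝ) {u : ℂ × ℂ} (hu : u ∈ Sset) :
    HasFDerivAt (W1 lam mu) (DW1 lam mu u) u :=
  (((hasFDerivAt_Gc hu.1).comp u Ladd.hasFDerivAt).const_mul ((lam : ℂ))).add
    (((hasFDerivAt_Gc hu.2).comp u Lsub.hasFDerivAt).const_mul ((mu : ℂ)))

lemma hasFDerivAt_W2 (lam mu : ℝ) {u : ℂ × ℂ} (hu : u ∈ Sset) :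
    HasFDerivAt (W2 lam mu) (DW2 lam mu u) u :=
  (((hasFDerivAt_Gc hu.1).comp u Ladd.hasFDerivAt).const_mul ((lam : ℂ))).sub
    (((hasFDerivAt_Gc hu.2).comp u Lsub.hasFDerivAt).const_mul ((mu : ℂ)))

lemma Ebar {z : ℂ} (hz : Complex.normSq z < 1) :
    (1/2 : ℂ) * (DGc z 1 + Complex.I * DGc z Complex.I) =
      ((((1 - Complex.normSq z) ^ 2)⁻¹ : ℝ) : ℂ) := by
  have hne : (1 : ℝ) - Complex.normSq z ≠ 0 := by intro h; nlinarith [h]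
  simp only [DGc, conjCLM, Nmap, ContinuousLinearMap.add_apply,
    ContinuousLinearMap.smul_apply, ContinuousLinearMap.smulRight_apply,
    ContinuousLinearMap.neg_apply, ContinuousLinearEquiv.coe_coe,
    Complex.conjCLE_apply, Complex.reCLM_apply, Complex.imCLM_apply,
    Complex.real_smul, map_one, Complex.conj_I, Complex.one_re, Complex.one_im,
    Complex.I_re, Complex.I_im, smul_eq_mul]
  set t : ℝ := 1 - Complex.normSq z with ht
  have hz' : (z.re : ℂ) + z.im * Complex.I = z := Complex.re_add_im z
  calc (1/2 : ℂ) *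
        ((t⁻¹ : ℝ) * 1 + ((-(t ^ 2)⁻¹ * -(2 * z.re * 1 + 2 * z.im * 0) : ℝ) : ℂ) * (starRingEnd ℂ) z +
          Complex.I * (((t⁻¹ : ℝ) : ℂ) * -Complex.I +
            ((-(t ^ 2)⁻¹ * -(2 * z.re * 0 + 2 * z.im * 1) : ℝ) : ℂ) * (starRingEnd ℂ) z))
      = ((t⁻¹ : ℝ) : ℂ) + (((t ^ 2)⁻¹ : ℝ) : ℂ) *
          (((z.re : ℂ) + z.im * Complex.I) * (starRingEnd ℂ) z) := by
        push_cast
        linear_combination (-(((t : ℝ) : ℂ))⁻¹ / 2) * Complex.I_sq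
    _ = ((t⁻¹ : ℝ) : ℂ) + (((t ^ 2)⁻¹ : ℝ) : ℂ) * ((Complex.normSq z : ℝ) : ℂ) := by
        rw [hz', Complex.mul_conj]
    _ = (((t ^ 2)⁻¹ : ℝ) : ℂ) := by
        norm_cast
        rw [ht]
        field_simp
        ring


theorem stmt15 (lam mu : ℝ) (hl : 0 < lam) (hm : 0 < mu) (u₁ : ℂ)
    (hu : ‖u₁‖ < 1) :
    !![wb1 (wd1 (logKu lam mu)) (u₁, 0), wb1 (wd2 (logKu lam mu)) (u₁, 0);
       wb2 (wd1 (logKu lam mu)) (u₁, 0), wb2 (wd2 (logKu lam mu)) (u₁, 0)] =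
      ((1 / (1 - ‖u₁‖ ^ 2) ^ 2 : ℝ) : ℂ) •
        !![((lam + mu : ℝ) : ℂ), ((lam - mu : ℝ) : ℂ);
           ((lam - mu : ℝ) : ℂ), ((lam + mu : ℝ) : ℂ)] := by
  have hz : Complex.normSq u₁ < 1 := by
    rw [← Complex.sq_norm]
    nlinarith [norm_nonneg u₁]
  have hp : ((u₁, 0) : ℂ × ℂ) ∈ Sset := by
    constructor <;> simpa using hz
  have hev1 : wd1 (logKu lam mu) =ᶠ[nhds ((u₁, 0) : ℂ × ℂ)] W1 lam mu :=
    Filter.eventuallyEq_of_mem (Sset_open.mem_nhds hp)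
      (fun v hv => by rw [wd1_eq lam mu hv]; rfl)
  have hev2 : wd2 (logKu lam mu) =ᶠ[nhds ((u₁, 0) : ℂ × ℂ)] W2 lam mu :=
    Filter.eventuallyEq_of_mem (Sset_open.mem_nhds hp)
      (fun v hv => by rw [wd2_eq lam mu hv]; rfl)
  have hfd1 : fderiv ℝ (wd1 (logKu lam mu)) ((u₁, 0) : ℂ × ℂ) = DW1 lam mu (u₁, 0) := by
    rw [hev1.fderiv_eq]; exact (hasFDerivAt_W1 lam mu hp).fderiv
  have hfd2 : fderiv ℝ (wd2 (logKu lam mu)) ((u₁, 0) : ℂ × ℂ) = DW2 lam mu (u₁, 0) := by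
    rw [hev2.fderiv_eq]; exact (hasFDerivAt_W2 lam mu hp).fderiv
  have hE := Ebar hz
  have e11 : wb1 (wd1 (logKu lam mu)) (u₁, 0) =
      ((lam : ℂ) + mu) * ((((1 - Complex.normSq u₁) ^ 2)⁻¹ : ℝ) : ℂ) := by
    unfold wb1; rw [hfd1]
    simp only [DW1, Ladd, Lsub, ContinuousLinearMap.add_apply, ContinuousLinearMap.sub_apply,
      ContinuousLinearMap.smul_apply, ContinuousLinearMap.comp_apply,
      ContinuousLinearMap.coe_fst', ContinuousLinearMap.coe_snd',
      add_zero, sub_zero, zero_add, zero_sub, map_neg, smul_eq_mul]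
    linear_combination ((lam : ℂ) + mu) * hE
  have e21 : wb2 (wd1 (logKu lam mu)) (u₁, 0) =
      ((lam : ℂ) - mu) * ((((1 - Complex.normSq u₁) ^ 2)⁻¹ : ℝ) : ℂ) := by
    unfold wb2; rw [hfd1]
    simp only [DW1, Ladd, Lsub, ContinuousLinearMap.add_apply, ContinuousLinearMap.sub_apply,
      ContinuousLinearMap.smul_apply, ContinuousLinearMap.comp_apply,
      ContinuousLinearMap.coe_fst', ContinuousLinearMap.coe_snd',
      add_zero, sub_zero, zero_add, zero_sub, map_neg, smul_eq_mul]
    linear_combination ((lam : ℂ) - mu) * hE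
  have e12 : wb1 (wd2 (logKu lam mu)) (u₁, 0) =
      ((lam : ℂ) - mu) * ((((1 - Complex.normSq u₁) ^ 2)⁻¹ : ℝ) : ℂ) := by
    unfold wb1; rw [hfd2]
    simp only [DW2, Ladd, Lsub, ContinuousLinearMap.add_apply, ContinuousLinearMap.sub_apply,
      ContinuousLinearMap.smul_apply, ContinuousLinearMap.comp_apply,
      ContinuousLinearMap.coe_fst', ContinuousLinearMap.coe_snd',
      add_zero, sub_zero, zero_add, zero_sub, map_neg, smul_eq_mul]
    linear_combination ((lam : ℂ) - mu) * hE
  have e22 : wb2 (wd2 (logKu lam mu)) (u₁, 0) =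
      ((lam : ℂ) + mu) * ((((1 - Complex.normSq u₁) ^ 2)⁻¹ : ℝ) : ℂ) := by
    unfold wb2; rw [hfd2]
    simp only [DW2, Ladd, Lsub, ContinuousLinearMap.add_apply, ContinuousLinearMap.sub_apply,
      ContinuousLinearMap.smul_apply, ContinuousLinearMap.comp_apply,
      ContinuousLinearMap.coe_fst', ContinuousLinearMap.coe_snd',
      add_zero, sub_zero, zero_add, zero_sub, map_neg, smul_eq_mul]
    linear_combination ((lam : ℂ) + mu) * hE
  ext i j
  fin_cases i <;> fin_cases j <;>
    simp [e11, e12, e21, e22, Matrix.smul_apply, Complex.sq_norm] <;>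
    push_cast <;> ring
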